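/- Let j ≥ 0 be an integer. Let v₀ ∈ Q_j, and for each m ∈ {1,2,3,4} let v_{b,m} be a real polynomial of degree ≤ j in the coordinate running along the edge F_m. Then the following are equivalent: (i) for every q ∈ RT_j(K) one has −∫_K v₀ (div q) dx dy + Σ_{m=1}^{4} ∫_{F_m} v_{b,m} (q·n_m) ds = 0; (ii) there exists a constant c ∈ ℝ such that v₀ ≡ c on K and v_{b,m} ≡ c on F_m for every m. -/

import Mathlib

open MeasureTheory MvPolynomial

noncomputable section

/-- Real polynomials in two variables. -/
abbrev Poly2 := MvPolynomial (Fin 2) ℝ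

/-- Evaluate a two-variable polynomial at `(x, y)`. -/
def evalP (p : Poly2) (x y : ℝ) : ℝ := MvPolynomial.eval ![x, y] p

/-- `Q_{r,s}`: degree `≤ r` in the first variable and `≤ s` in the second. -/
def memQ (r s : ℕ) (p : Poly2) : Prop := p.degreeOf 0 ≤ r ∧ p.degreeOf 1 ≤ s

/-- The divergence of a polynomial vector field. -/
def divP (q : Poly2 × Poly2) : Poly2 := pderiv 0 q.1 + pderiv 1 q.2

/-- The Raviart–Thomas space `RT_j(K) = Q_{j+1,j} × Q_{j,j+1}`. -/
def memRT (j : ℕ) (q : Poly2 × Poly2) : Prop := memQ (j+1) j q.1 ∧ memQ j (j+1) q.2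

namespace S0

lemma evalP_eq (p : Poly2) (x y : ℝ) :
    evalP p x y = ∑ d ∈ p.support, MvPolynomial.coeff d p * (x ^ d 0 * y ^ d 1) := by
  rw [evalP, MvPolynomial.eval_eq']
  refine Finset.sum_congr rfl fun d _ => ?_
  rw [Fin.prod_univ_two]
  simp

lemma continuous_evalP (p : Poly2) : Continuous fun z : ℝ × ℝ => evalP p z.1 z.2 := by
  simp only [evalP_eq]
  exact continuous_finset_sum _ fun d _ => by fun_prop

lemma continuous_evalP_x (p : Poly2) (y : ℝ) : Continuous fun x : ℝ => evalP p x y := by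
  simp only [evalP_eq]
  exact continuous_finset_sum _ fun d _ => by fun_prop

lemma continuous_evalP_y (p : Poly2) (x : ℝ) : Continuous fun y : ℝ => evalP p x y := by
  simp only [evalP_eq]
  exact continuous_finset_sum _ fun d _ => by fun_prop

/-- A polynomial nonneg on `Ioc a b` with zero integral is the zero polynomial. -/
lemma poly_eq_zero_of_integral {a b : ℝ} (hab : a < b) {p : Polynomial ℝ}
    (hnn : ∀ x ∈ Set.Ioc a b, 0 ≤ p.eval x)
    (hint : (∫ x in a..b, p.eval x) = 0) : p = 0 := by
  by_contra hp
  have hfin : Set.Finite {x | p.IsRoot x} := Polynomial.finite_setOf_isRoot hp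
  have hI : IntegrableOn (fun x => p.eval x) (Set.Ioc a b) volume :=
    (p.continuous_aeval).integrableOn_Ioc
  have hpos : 0 < ∫ x in Set.Ioc a b, p.eval x := by
    rw [setIntegral_pos_iff_support_of_nonneg_ae
      ((ae_restrict_iff' measurableSet_Ioc).2 (ae_of_all _ hnn)) hI]
    have hsub : Set.Ioc a b \ {x | p.IsRoot x} ⊆
        (Function.support fun x => p.eval x) ∩ Set.Ioc a b := by
      rintro x ⟨hx1, hx2⟩
      exact ⟨hx2, hx1⟩
    calc (0 : ENNReal) < volume (Set.Ioc a b \ {x | p.IsRoot x}) := by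
          rw [measure_diff_null (hfin.measure_zero _)]
          simp [hab]
      _ ≤ _ := measure_mono hsub
  rw [intervalIntegral.integral_of_le hab.le] at hint
  exact absurd hint hpos.ne'

lemma orth {a b : ℝ} (hab : a < b) {n : ℕ} {p : Polynomial ℝ} (hp : p.natDegree ≤ n)
    (h : ∀ q : Polynomial ℝ, q.natDegree ≤ n → (∫ x in a..b, p.eval x * q.eval x) = 0) :
    p = 0 := by
  have h2 := h p hp
  have h3 : p * p = 0 := by
    refine poly_eq_zero_of_integral hab (fun x _ => by simp [mul_self_nonneg]) ?_
    simpa using h2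
  exact mul_self_eq_zero.1 h3

lemma integral_derivative (p : Polynomial ℝ) (a b : ℝ) :
    (∫ x in a..b, (Polynomial.derivative p).eval x) = p.eval b - p.eval a := by
  refine intervalIntegral.integral_eq_sub_of_hasDerivAt (fun x _ => p.hasDerivAt x) ?_
  exact (Polynomial.derivative p).continuous_aeval.intervalIntegrable _ _

end S0
namespace S0

lemma key1d {a b : ℝ} (hab : a < b) {n : ℕ} {u : Polynomial ℝ} (hu : u.natDegree ≤ n)
    {α β : ℝ}
    (h : ∀ f : Polynomial ℝ, f.natDegree ≤ n + 1 →
      -(∫ x in a..b, u.eval x * (Polynomial.derivative f).eval x)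
        + β * f.eval b - α * f.eval a = 0) :
    Polynomial.derivative u = 0 ∧ u.eval a = α ∧ u.eval b = β := by
  have key : ∀ f : Polynomial ℝ, f.natDegree ≤ n + 1 →
      (∫ x in a..b, (Polynomial.derivative u).eval x * f.eval x)
        + (β - u.eval b) * f.eval b - (α - u.eval a) * f.eval a = 0 := by
    intro f hf
    have h0 := h f hf
    have h1 : (∫ x in a..b, (Polynomial.derivative (u * f)).eval x)
        = u.eval b * f.eval b - u.eval a * f.eval a := by
      rw [integral_derivative]; simp
    rw [Polynomial.derivative_mul] at h1
    simp only [Polynomial.eval_add, Polynomial.eval_mul] at h1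
    rw [intervalIntegral.integral_add
      (f := fun x => (Polynomial.derivative u).eval x * f.eval x)
      (g := fun x => u.eval x * (Polynomial.derivative f).eval x)
      (((Polynomial.derivative u).continuous.mul f.continuous).intervalIntegrable _ _)
      ((u.continuous.mul (Polynomial.derivative f).continuous).intervalIntegrable _ _)]
      at h1
    linarith
  have hd : Polynomial.derivative u = 0 := by
    by_contra hd0
    have hn1 : 1 ≤ u.natDegree := by
      by_contra hc
      have h00 : u.natDegree = 0 := by omega
      exact hd0 (by rw [Polynomial.eq_C_of_natDegree_eq_zero h00]; simp)
    set w : Polynomial ℝ := (Polynomial.X - Polynomial.C a) * (Polynomial.C b - Polynomial.X)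
      with hw
    set f := w * Polynomial.derivative u with hfdef
    have hwd : w.natDegree ≤ 2 := by
      refine le_trans Polynomial.natDegree_mul_le ?_
      have : (Polynomial.C b - Polynomial.X : Polynomial ℝ).natDegree ≤ 1 := by
        refine le_trans (Polynomial.natDegree_sub_le _ _) ?_
        simp
      have h2 : (Polynomial.X - Polynomial.C a : Polynomial ℝ).natDegree ≤ 1 := by
        refine le_trans (Polynomial.natDegree_sub_le _ _) ?_
        simp
      omega
    have hfd : f.natDegree ≤ n + 1 := by
      refine le_trans Polynomial.natDegree_mul_le ?_
      have := Polynomial.natDegree_derivative_le u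
      omega
    have hk := key f hfd
    have hfa : f.eval a = 0 := by simp [hfdef, hw]
    have hfb : f.eval b = 0 := by simp [hfdef, hw]
    rw [hfa, hfb] at hk
    simp only [mul_zero, add_zero, sub_zero] at hk
    have hint : (∫ x in a..b, (w * Polynomial.derivative u ^ 2).eval x) = 0 := by
      rw [← hk]
      refine intervalIntegral.integral_congr fun x _ => ?_
      simp [hfdef]; ring
    have hz : w * Polynomial.derivative u ^ 2 = 0 := by
      refine poly_eq_zero_of_integral hab (fun x hx => ?_) hint
      have : (0:ℝ) ≤ w.eval x := by
        simp only [hw, Polynomial.eval_mul, Polynomial.eval_sub, Polynomial.eval_X,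
          Polynomial.eval_C]
        nlinarith [hx.1, hx.2]
      simp only [Polynomial.eval_mul, Polynomial.eval_pow]
      positivity
    have hwne : w ≠ 0 := by
      intro hww
      have : w.eval ((a+b)/2) = 0 := by rw [hww]; simp
      simp only [hw, Polynomial.eval_mul, Polynomial.eval_sub, Polynomial.eval_X,
        Polynomial.eval_C] at this
      nlinarith
    rcases mul_eq_zero.1 hz with h' | h'
    · exact hwne h'
    · exact hd0 (pow_eq_zero_iff (by norm_num) |>.1 h')
  refine ⟨hd, ?_, ?_⟩
  · have k1 := key 1 (by simp)
    have k2 := key (Polynomial.X - Polynomial.C a) (by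
      refine le_trans (Polynomial.natDegree_sub_le _ _) ?_; simp)
    simp only [hd, Polynomial.eval_zero, zero_mul, Polynomial.eval_one, mul_one,
      intervalIntegral.integral_zero, zero_add, Polynomial.eval_sub, Polynomial.eval_X,
      Polynomial.eval_C, sub_self, mul_zero, sub_zero] at k1 k2
    have : β = u.eval b := by
      have hba : b - a ≠ 0 := by linarith
      have := mul_eq_zero.1 k2
      rcases this with h' | h'
      · linarith
      · exact absurd h' hba
    linarith
  · have k2 := key (Polynomial.X - Polynomial.C a) (by
      refine le_trans (Polynomial.natDegree_sub_le _ _) ?_; simp)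
    simp only [hd, Polynomial.eval_zero, zero_mul, intervalIntegral.integral_zero, zero_add,
      Polynomial.eval_sub, Polynomial.eval_X, Polynomial.eval_C, sub_self, mul_zero,
      sub_zero] at k2
    have hba : b - a ≠ 0 := by linarith
    rcases mul_eq_zero.1 k2 with h' | h'
    · linarith
    · exact absurd h' hba

end S0

namespace S0

/-- Generic "apply a coefficientwise map and sum" gadget. -/
def msum (F : (Fin 2 →₀ ℕ) → ℝ → Polynomial ℝ) (p : Poly2) : Polynomial ℝ :=
  ∑ d ∈ p.support, F d (MvPolynomial.coeff d p)

lemma msum_eq_sum_subset (F : (Fin 2 →₀ ℕ) → ℝ → Polynomial ℝ) (hF0 : ∀ d, F d 0 = 0)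
    (p : Poly2) {s : Finset (Fin 2 →₀ ℕ)} (hs : p.support ⊆ s) :
    msum F p = ∑ d ∈ s, F d (MvPolynomial.coeff d p) := by
  refine Finset.sum_subset hs fun d _ hd => ?_
  rw [MvPolynomial.notMem_support_iff.mp hd, hF0]

lemma msum_add (F : (Fin 2 →₀ ℕ) → ℝ → Polynomial ℝ) (hF0 : ∀ d, F d 0 = 0)
    (hFadd : ∀ d a b, F d (a + b) = F d a + F d b) (p q : Poly2) :
    msum F (p + q) = msum F p + msum F q := by
  rw [msum_eq_sum_subset F hF0 (p+q) (Finset.Subset.trans (MvPolynomial.support_add)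
        (Finset.Subset.refl _)),
      msum_eq_sum_subset F hF0 p (Finset.subset_union_left),
      msum_eq_sum_subset F hF0 q (Finset.subset_union_right),
      ← Finset.sum_add_distrib]
  exact Finset.sum_congr rfl fun d _ => by rw [MvPolynomial.coeff_add, hFadd]

lemma msum_monomial (F : (Fin 2 →₀ ℕ) → ℝ → Polynomial ℝ) (hF0 : ∀ d, F d 0 = 0)
    (d : Fin 2 →₀ ℕ) (c : ℝ) : msum F (MvPolynomial.monomial d c) = F d c := by
  by_cases hc : c = 0
  · subst hc
    rw [hF0]
    simp [msum]
  · rw [msum, MvPolynomial.support_monomial, if_neg hc]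
    simp [MvPolynomial.coeff_monomial]

def Yp (x : ℝ) (p : Poly2) : Polynomial ℝ :=
  msum (fun d c => Polynomial.C (c * x ^ d 0) * Polynomial.X ^ d 1) p

def intY (a b : ℝ) (g : ℝ → ℝ) (p : Poly2) : Polynomial ℝ :=
  msum (fun d c => Polynomial.C (c * ∫ y in a..b, y ^ d 1 * g y) * Polynomial.X ^ d 0) p

lemma Yp_eval (x : ℝ) (p : Poly2) (y : ℝ) : (Yp x p).eval y = evalP p x y := by
  rw [Yp, msum, Polynomial.eval_finset_sum, evalP_eq]
  refine Finset.sum_congr rfl fun d _ => ?_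
  simp; ring

lemma Yp_natDegree (x : ℝ) (p : Poly2) : (Yp x p).natDegree ≤ p.degreeOf 1 := by
  refine Polynomial.natDegree_sum_le_of_forall_le _ _ fun d hd => ?_
  exact le_trans (Polynomial.natDegree_C_mul_X_pow_le _ _)
    (MvPolynomial.degreeOf_le_iff.mp le_rfl d hd)

lemma Yp_pderiv (x : ℝ) (p : Poly2) :
    Yp x (pderiv 1 p) = Polynomial.derivative (Yp x p) := by
  induction p using MvPolynomial.induction_on' with
  | monomial d c =>
    rw [pderiv_monomial]
    unfold Yp
    rw [msum_monomial _ (by intro d; simp), msum_monomial _ (by intro d; simp)]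
    have h0 : (d - Finsupp.single (1 : Fin 2) (1:ℕ)) 0 = d 0 := by
      simp [Finsupp.tsub_apply, Finsupp.single_apply]
    have h1 : (d - Finsupp.single (1 : Fin 2) (1:ℕ)) 1 = d 1 - 1 := by
      simp [Finsupp.tsub_apply, Finsupp.single_apply]
    rw [h0, h1, Polynomial.C_mul_X_pow_eq_monomial, Polynomial.C_mul_X_pow_eq_monomial,
      Polynomial.derivative_monomial]
    congr 1
    ring
  | add p q hp hq =>
    unfold Yp at *
    rw [map_add, msum_add _ (by intro d; simp) (fun d a b => by rw [add_mul, map_add, add_mul]),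
      msum_add _ (by intro d; simp) (fun d a b => by rw [add_mul, map_add, add_mul]),
      map_add, hp, hq]

lemma intY_eval {g : ℝ → ℝ} (hg : Continuous g) (a b : ℝ) (p : Poly2) (x : ℝ) :
    (intY a b g p).eval x = ∫ y in a..b, evalP p x y * g y := by
  rw [intY, msum, Polynomial.eval_finset_sum]
  have : (∫ y in a..b, evalP p x y * g y)
      = ∫ y in a..b, ∑ d ∈ p.support,
          (MvPolynomial.coeff d p * x ^ d 0) * (y ^ d 1 * g y) := by
    refine intervalIntegral.integral_congr fun y _ => ?_
    rw [evalP_eq, Finset.sum_mul]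
    exact Finset.sum_congr rfl fun d _ => by ring
  rw [this, intervalIntegral.integral_finset_sum (fun d _ =>
    ((by fun_prop : Continuous fun y : ℝ =>
      (MvPolynomial.coeff d p * x ^ d 0) * (y ^ d 1 * g y)).intervalIntegrable _ _))]
  refine Finset.sum_congr rfl fun d _ => ?_
  rw [intervalIntegral.integral_const_mul]
  simp; ring

lemma intY_natDegree (a b : ℝ) (g : ℝ → ℝ) (p : Poly2) :
    (intY a b g p).natDegree ≤ p.degreeOf 0 := by
  refine Polynomial.natDegree_sum_le_of_forall_le _ _ fun d hd => ?_
  exact le_trans (Polynomial.natDegree_C_mul_X_pow_le _ _)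
    (MvPolynomial.degreeOf_le_iff.mp le_rfl d hd)

lemma intY_pderiv (a b : ℝ) (g : ℝ → ℝ) (p : Poly2) :
    intY a b g (pderiv 0 p) = Polynomial.derivative (intY a b g p) := by
  induction p using MvPolynomial.induction_on' with
  | monomial d c =>
    rw [pderiv_monomial]
    unfold intY
    rw [msum_monomial _ (by intro d; simp), msum_monomial _ (by intro d; simp)]
    have h0 : (d - Finsupp.single (0 : Fin 2) (1:ℕ)) 1 = d 1 := by
      simp [Finsupp.tsub_apply, Finsupp.single_apply]
    have h1 : (d - Finsupp.single (0 : Fin 2) (1:ℕ)) 0 = d 0 - 1 := by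
      simp [Finsupp.tsub_apply, Finsupp.single_apply]
    rw [h0, h1, Polynomial.C_mul_X_pow_eq_monomial, Polynomial.C_mul_X_pow_eq_monomial,
      Polynomial.derivative_monomial]
    congr 1
    ring
  | add p q hp hq =>
    unfold intY at *
    rw [map_add, msum_add _ (by intro d; simp) (fun d a b => by rw [add_mul, map_add, add_mul]),
      msum_add _ (by intro d; simp) (fun d a b => by rw [add_mul, map_add, add_mul]),
      map_add, hp, hq]

end S0

namespace S0

def emb0 (f : Polynomial ℝ) : Poly2 :=
  f.sum fun n a => MvPolynomial.monomial (Finsupp.single (0 : Fin 2) n) a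

def emb1 (g : Polynomial ℝ) : Poly2 :=
  g.sum fun n a => MvPolynomial.monomial (Finsupp.single (1 : Fin 2) n) a

lemma emb0_monomial (n : ℕ) (a : ℝ) :
    emb0 (Polynomial.monomial n a) = MvPolynomial.monomial (Finsupp.single (0 : Fin 2) n) a :=
  Polynomial.sum_monomial_index _ _ (by simp)

lemma emb1_monomial (n : ℕ) (a : ℝ) :
    emb1 (Polynomial.monomial n a) = MvPolynomial.monomial (Finsupp.single (1 : Fin 2) n) a :=
  Polynomial.sum_monomial_index _ _ (by simp)

lemma emb0_add (f g : Polynomial ℝ) : emb0 (f + g) = emb0 f + emb0 g :=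
  Polynomial.sum_add_index _ _ _ (fun _ => by simp) (fun _ _ _ => by rw [map_add])

lemma emb1_add (f g : Polynomial ℝ) : emb1 (f + g) = emb1 f + emb1 g :=
  Polynomial.sum_add_index _ _ _ (fun _ => by simp) (fun _ _ _ => by rw [map_add])

lemma evalP_emb0 (f : Polynomial ℝ) (x y : ℝ) : evalP (emb0 f) x y = f.eval x := by
  induction f using Polynomial.induction_on' with
  | monomial n a =>
    rw [emb0_monomial, evalP, MvPolynomial.eval_monomial, Finsupp.prod_single_index (by simp)]
    simp
  | add p q hp hq => rw [emb0_add, evalP, map_add, ← evalP, ← evalP, hp, hq]; simp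

lemma evalP_emb1 (g : Polynomial ℝ) (x y : ℝ) : evalP (emb1 g) x y = g.eval y := by
  induction g using Polynomial.induction_on' with
  | monomial n a =>
    rw [emb1_monomial, evalP, MvPolynomial.eval_monomial, Finsupp.prod_single_index (by simp)]
    simp
  | add p q hp hq => rw [emb1_add, evalP, map_add, ← evalP, ← evalP, hp, hq]; simp

lemma pderiv0_emb0 (f : Polynomial ℝ) :
    pderiv 0 (emb0 f) = emb0 (Polynomial.derivative f) := by
  induction f using Polynomial.induction_on' with
  | monomial n a =>
    rw [emb0_monomial, pderiv_monomial_single, Polynomial.derivative_monomial, emb0_monomial]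
  | add p q hp hq => rw [emb0_add, map_add, hp, hq, map_add, emb0_add]

lemma pderiv1_emb1 (g : Polynomial ℝ) :
    pderiv 1 (emb1 g) = emb1 (Polynomial.derivative g) := by
  induction g using Polynomial.induction_on' with
  | monomial n a =>
    rw [emb1_monomial, pderiv_monomial_single, Polynomial.derivative_monomial, emb1_monomial]
  | add p q hp hq => rw [emb1_add, map_add, hp, hq, map_add, emb1_add]

lemma pderiv1_emb0 (f : Polynomial ℝ) : pderiv 1 (emb0 f) = 0 := by
  induction f using Polynomial.induction_on' with
  | monomial n a =>
    rw [emb0_monomial, pderiv_monomial]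
    simp [Finsupp.single_apply]
  | add p q hp hq => rw [emb0_add, map_add, hp, hq, add_zero]

lemma pderiv0_emb1 (g : Polynomial ℝ) : pderiv 0 (emb1 g) = 0 := by
  induction g using Polynomial.induction_on' with
  | monomial n a =>
    rw [emb1_monomial, pderiv_monomial]
    simp [Finsupp.single_apply]
  | add p q hp hq => rw [emb1_add, map_add, hp, hq, add_zero]

lemma emb0_support (f : Polynomial ℝ) :
    ∀ m ∈ (emb0 f).support, ∃ n ∈ f.support, m = Finsupp.single (0 : Fin 2) n := by
  intro m hm
  have := MvPolynomial.support_sum hm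
  rw [Finset.mem_biUnion] at this
  obtain ⟨n, hn, hmem⟩ := this
  have := MvPolynomial.support_monomial_subset hmem
  simp only [Finset.mem_singleton] at this
  exact ⟨n, hn, this⟩

lemma emb1_support (g : Polynomial ℝ) :
    ∀ m ∈ (emb1 g).support, ∃ n ∈ g.support, m = Finsupp.single (1 : Fin 2) n := by
  intro m hm
  have := MvPolynomial.support_sum hm
  rw [Finset.mem_biUnion] at this
  obtain ⟨n, hn, hmem⟩ := this
  have := MvPolynomial.support_monomial_subset hmem
  simp only [Finset.mem_singleton] at this
  exact ⟨n, hn, this⟩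

lemma degreeOf0_emb0 (f : Polynomial ℝ) : (emb0 f).degreeOf 0 ≤ f.natDegree := by
  rw [MvPolynomial.degreeOf_le_iff]
  intro m hm
  obtain ⟨n, hn, rfl⟩ := emb0_support f m hm
  simpa using Polynomial.le_natDegree_of_mem_supp n hn

lemma degreeOf1_emb0 (f : Polynomial ℝ) : (emb0 f).degreeOf 1 = 0 := by
  refine Nat.le_zero.mp ?_
  rw [MvPolynomial.degreeOf_le_iff]
  intro m hm
  obtain ⟨n, hn, rfl⟩ := emb0_support f m hm
  simp [Finsupp.single_apply]

lemma degreeOf1_emb1 (g : Polynomial ℝ) : (emb1 g).degreeOf 1 ≤ g.natDegree := by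
  rw [MvPolynomial.degreeOf_le_iff]
  intro m hm
  obtain ⟨n, hn, rfl⟩ := emb1_support g m hm
  simpa using Polynomial.le_natDegree_of_mem_supp n hn

lemma degreeOf0_emb1 (g : Polynomial ℝ) : (emb1 g).degreeOf 0 = 0 := by
  refine Nat.le_zero.mp ?_
  rw [MvPolynomial.degreeOf_le_iff]
  intro m hm
  obtain ⟨n, hn, rfl⟩ := emb1_support g m hm
  simp [Finsupp.single_apply]

lemma fubini {x₀ x₁ y₀ y₁ : ℝ} (hx : x₀ ≤ x₁) (hy : y₀ ≤ y₁) (F : ℝ → ℝ → ℝ)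
    (hF : Continuous fun z : ℝ × ℝ => F z.1 z.2) :
    (∫ z in Set.Icc x₀ x₁ ×ˢ Set.Icc y₀ y₁, F z.1 z.2)
      = ∫ x in x₀..x₁, ∫ y in y₀..y₁, F x y := by
  rw [MeasureTheory.Measure.volume_eq_prod, MeasureTheory.setIntegral_prod _
    ((hF.continuousOn).integrableOn_compact (isCompact_Icc.prod isCompact_Icc))]
  rw [intervalIntegral.integral_of_le hx, ← MeasureTheory.integral_Icc_eq_integral_Ioc]
  refine setIntegral_congr_fun measurableSet_Icc fun x _ => ?_
  rw [intervalIntegral.integral_of_le hy, ← MeasureTheory.integral_Icc_eq_integral_Ioc]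

end S0

namespace S0

def memQ' (r s : ℕ) (p : Poly2) : Prop := p.degreeOf 0 ≤ r ∧ p.degreeOf 1 ≤ s

lemma stepX {j : ℕ} {x₀ x₁ y₀ y₁ : ℝ} (hx : x₀ < x₁) (hy : y₀ < y₁)
    {v₀ : Poly2} (hv₀ : memQ' j j v₀) {vb₁ vb₂ : Polynomial ℝ}
    (h₁ : vb₁.natDegree ≤ j) (h₂ : vb₂.natDegree ≤ j)
    (H : ∀ f g : Polynomial ℝ, f.natDegree ≤ j + 1 → g.natDegree ≤ j →
      -(∫ z in Set.Icc x₀ x₁ ×ˢ Set.Icc y₀ y₁,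
          evalP v₀ z.1 z.2 * ((Polynomial.derivative f).eval z.1 * g.eval z.2))
        + (-(f.eval x₀) * (∫ y in y₀..y₁, vb₁.eval y * g.eval y)
           + f.eval x₁ * (∫ y in y₀..y₁, vb₂.eval y * g.eval y)) = 0) :
    (∀ x x' y : ℝ, evalP v₀ x y = evalP v₀ x' y)
      ∧ (∀ y : ℝ, vb₁.eval y = evalP v₀ x₀ y)
      ∧ (∀ y : ℝ, vb₂.eval y = evalP v₀ x₁ y) := by
  have master : ∀ g : Polynomial ℝ, g.natDegree ≤ j →
      Polynomial.derivative (intY y₀ y₁ g.eval v₀) = 0 ∧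
      (intY y₀ y₁ g.eval v₀).eval x₀ = (∫ y in y₀..y₁, vb₁.eval y * g.eval y) ∧
      (intY y₀ y₁ g.eval v₀).eval x₁ = (∫ y in y₀..y₁, vb₂.eval y * g.eval y) := by
    intro g hg
    refine key1d hx (le_trans (intY_natDegree _ _ _ _) hv₀.1) ?_
    intro f hf
    have hH := H f g hf hg
    have hrect : (∫ z in Set.Icc x₀ x₁ ×ˢ Set.Icc y₀ y₁,
        evalP v₀ z.1 z.2 * ((Polynomial.derivative f).eval z.1 * g.eval z.2))
        = ∫ x in x₀..x₁, (intY y₀ y₁ g.eval v₀).eval x * (Polynomial.derivative f).eval x := by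
      have h2 : Continuous fun z : ℝ × ℝ =>
          (Polynomial.derivative f).eval z.1 * g.eval z.2 := by fun_prop
      rw [show (∫ z in Set.Icc x₀ x₁ ×ˢ Set.Icc y₀ y₁,
          evalP v₀ z.1 z.2 * ((Polynomial.derivative f).eval z.1 * g.eval z.2))
          = ∫ x in x₀..x₁, ∫ y in y₀..y₁,
              evalP v₀ x y * ((Polynomial.derivative f).eval x * g.eval y) from
        fubini hx.le hy.le
          (fun x y => evalP v₀ x y * ((Polynomial.derivative f).eval x * g.eval y))
          ((continuous_evalP v₀).mul h2)]
      refine intervalIntegral.integral_congr fun x _ => ?_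
      calc (∫ y in y₀..y₁, evalP v₀ x y * ((Polynomial.derivative f).eval x * g.eval y))
          = ∫ y in y₀..y₁, (evalP v₀ x y * g.eval y) * (Polynomial.derivative f).eval x :=
            intervalIntegral.integral_congr fun y _ => by ring
        _ = (∫ y in y₀..y₁, evalP v₀ x y * g.eval y) * (Polynomial.derivative f).eval x :=
            intervalIntegral.integral_mul_const _ _
        _ = _ := by rw [intY_eval g.continuous]
    rw [hrect] at hH
    linarith
  have hconst : ∀ g : Polynomial ℝ, g.natDegree ≤ j → ∀ x x' : ℝ,
      (intY y₀ y₁ g.eval v₀).eval x = (intY y₀ y₁ g.eval v₀).eval x' := by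
    intro g hg x x'
    rw [Polynomial.eq_C_of_derivative_eq_zero (master g hg).1]
    simp
  have hYint : ∀ (x : ℝ) (g : Polynomial ℝ),
      (∫ y in y₀..y₁, (Yp x v₀).eval y * g.eval y) = (intY y₀ y₁ g.eval v₀).eval x := by
    intro x g
    rw [intY_eval g.continuous]
    exact intervalIntegral.integral_congr fun y _ => by rw [Yp_eval]
  refine ⟨?_, ?_, ?_⟩
  · intro x x' y
    have hD : Yp x v₀ - Yp x' v₀ = 0 := by
      refine orth hy (n := j) ?_ ?_
      · refine le_trans (Polynomial.natDegree_sub_le _ _) ?_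
        exact max_le (le_trans (Yp_natDegree _ _) hv₀.2) (le_trans (Yp_natDegree _ _) hv₀.2)
      · intro g hg
        have hsplit : (∫ y in y₀..y₁, (Yp x v₀ - Yp x' v₀).eval y * g.eval y)
            = (∫ y in y₀..y₁, (Yp x v₀).eval y * g.eval y)
              - ∫ y in y₀..y₁, (Yp x' v₀).eval y * g.eval y := by
          rw [← intervalIntegral.integral_sub (f := fun y => (Yp x v₀).eval y * g.eval y)
            (g := fun y => (Yp x' v₀).eval y * g.eval y)
            (((Yp x v₀).continuous.mul g.continuous).intervalIntegrable _ _)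
            (((Yp x' v₀).continuous.mul g.continuous).intervalIntegrable _ _)]
          exact intervalIntegral.integral_congr fun y _ => by simp; ring
        rw [hsplit, hYint, hYint, hconst g hg x x', sub_self]
    have := congrArg (Polynomial.eval y) hD
    simp only [Polynomial.eval_sub, Polynomial.eval_zero, Yp_eval, sub_eq_zero] at this
    exact this
  · intro y
    have hD : vb₁ - Yp x₀ v₀ = 0 := by
      refine orth hy (n := j) ?_ ?_
      · exact le_trans (Polynomial.natDegree_sub_le _ _)
          (max_le h₁ (le_trans (Yp_natDegree _ _) hv₀.2))
      · intro g hg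
        have hsplit : (∫ y in y₀..y₁, (vb₁ - Yp x₀ v₀).eval y * g.eval y)
            = (∫ y in y₀..y₁, vb₁.eval y * g.eval y)
              - ∫ y in y₀..y₁, (Yp x₀ v₀).eval y * g.eval y := by
          rw [← intervalIntegral.integral_sub (f := fun y => vb₁.eval y * g.eval y)
            (g := fun y => (Yp x₀ v₀).eval y * g.eval y)
            ((vb₁.continuous.mul g.continuous).intervalIntegrable _ _)
            (((Yp x₀ v₀).continuous.mul g.continuous).intervalIntegrable _ _)]
          exact intervalIntegral.integral_congr fun y _ => by simp; ring
        rw [hsplit, hYint, (master g hg).2.1, sub_self]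
    have := congrArg (Polynomial.eval y) hD
    simp only [Polynomial.eval_sub, Polynomial.eval_zero, Yp_eval, sub_eq_zero] at this
    exact this
  · intro y
    have hD : vb₂ - Yp x₁ v₀ = 0 := by
      refine orth hy (n := j) ?_ ?_
      · exact le_trans (Polynomial.natDegree_sub_le _ _)
          (max_le h₂ (le_trans (Yp_natDegree _ _) hv₀.2))
      · intro g hg
        have hsplit : (∫ y in y₀..y₁, (vb₂ - Yp x₁ v₀).eval y * g.eval y)
            = (∫ y in y₀..y₁, vb₂.eval y * g.eval y)
              - ∫ y in y₀..y₁, (Yp x₁ v₀).eval y * g.eval y := by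
          rw [← intervalIntegral.integral_sub (f := fun y => vb₂.eval y * g.eval y)
            (g := fun y => (Yp x₁ v₀).eval y * g.eval y)
            ((vb₂.continuous.mul g.continuous).intervalIntegrable _ _)
            (((Yp x₁ v₀).continuous.mul g.continuous).intervalIntegrable _ _)]
          exact intervalIntegral.integral_congr fun y _ => by simp; ring
        rw [hsplit, hYint, (master g hg).2.2, sub_self]
    have := congrArg (Polynomial.eval y) hD
    simp only [Polynomial.eval_sub, Polynomial.eval_zero, Yp_eval, sub_eq_zero] at this
    exact this

end S0

namespace S0

lemma stepY {j : ℕ} {x₀ x₁ y₀ y₁ : ℝ} (hx : x₀ < x₁) (hy : y₀ < y₁)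
    {v₀ : Poly2} (hv₀ : memQ' j j v₀) {vb₃ vb₄ : Polynomial ℝ}
    (h₃ : vb₃.natDegree ≤ j) (h₄ : vb₄.natDegree ≤ j)
    (H : ∀ f g : Polynomial ℝ, f.natDegree ≤ j → g.natDegree ≤ j + 1 →
      -(∫ z in Set.Icc x₀ x₁ ×ˢ Set.Icc y₀ y₁,
          evalP v₀ z.1 z.2 * (f.eval z.1 * (Polynomial.derivative g).eval z.2))
        + (-(g.eval y₀) * (∫ x in x₀..x₁, vb₃.eval x * f.eval x)
           + g.eval y₁ * (∫ x in x₀..x₁, vb₄.eval x * f.eval x)) = 0) :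
    (∀ x y y' : ℝ, evalP v₀ x y = evalP v₀ x y')
      ∧ (∀ x : ℝ, vb₃.eval x = evalP v₀ x y₀)
      ∧ (∀ x : ℝ, vb₄.eval x = evalP v₀ x y₁) := by
  have hR : ∀ g : Polynomial ℝ, g.natDegree ≤ j + 1 → ∀ x : ℝ,
      (∫ y in y₀..y₁, evalP v₀ x y * (Polynomial.derivative g).eval y)
        = g.eval y₁ * vb₄.eval x - g.eval y₀ * vb₃.eval x := by
    intro g hg
    set W := intY y₀ y₁ (Polynomial.derivative g).eval v₀ with hW
    set R := -W - Polynomial.C (g.eval y₀) * vb₃ + Polynomial.C (g.eval y₁) * vb₄ with hRdef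
    have hR0 : R = 0 := by
      refine orth hx (n := j) ?_ ?_
      · refine le_trans (Polynomial.natDegree_add_le _ _) (max_le ?_ ?_)
        · refine le_trans (Polynomial.natDegree_sub_le _ _) (max_le ?_ ?_)
          · rw [Polynomial.natDegree_neg]
            exact le_trans (intY_natDegree _ _ _ _) hv₀.1
          · exact le_trans (Polynomial.natDegree_C_mul_le _ _) h₃
        · exact le_trans (Polynomial.natDegree_C_mul_le _ _) h₄
      · intro f hf
        have hH := H f g hf hg
        have h2 : Continuous fun z : ℝ × ℝ =>
            f.eval z.1 * (Polynomial.derivative g).eval z.2 := by fun_prop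
        rw [show (∫ z in Set.Icc x₀ x₁ ×ˢ Set.Icc y₀ y₁,
            evalP v₀ z.1 z.2 * (f.eval z.1 * (Polynomial.derivative g).eval z.2))
            = ∫ x in x₀..x₁, ∫ y in y₀..y₁,
                evalP v₀ x y * (f.eval x * (Polynomial.derivative g).eval y) from
          fubini hx.le hy.le
            (fun x y => evalP v₀ x y * (f.eval x * (Polynomial.derivative g).eval y))
            ((continuous_evalP v₀).mul h2)] at hH
        have hinner : (∫ x in x₀..x₁, ∫ y in y₀..y₁,
            evalP v₀ x y * (f.eval x * (Polynomial.derivative g).eval y))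
            = ∫ x in x₀..x₁, W.eval x * f.eval x := by
          refine intervalIntegral.integral_congr fun x _ => ?_
          calc (∫ y in y₀..y₁, evalP v₀ x y * (f.eval x * (Polynomial.derivative g).eval y))
              = ∫ y in y₀..y₁,
                  (evalP v₀ x y * (Polynomial.derivative g).eval y) * f.eval x :=
                intervalIntegral.integral_congr fun y _ => by ring
            _ = (∫ y in y₀..y₁, evalP v₀ x y * (Polynomial.derivative g).eval y) * f.eval x :=
                intervalIntegral.integral_mul_const _ _
            _ = _ := by rw [hW, intY_eval (Polynomial.derivative g).continuous]
        rw [hinner] at hH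
        have c1 : IntervalIntegrable (fun x => -(W.eval x * f.eval x)) volume x₀ x₁ :=
          ((W.continuous.mul f.continuous).neg).intervalIntegrable _ _
        have c2 : IntervalIntegrable
            (fun x => g.eval y₀ * (vb₃.eval x * f.eval x)) volume x₀ x₁ :=
          (continuous_const.mul (vb₃.continuous.mul f.continuous)).intervalIntegrable _ _
        have c3 : IntervalIntegrable
            (fun x => g.eval y₁ * (vb₄.eval x * f.eval x)) volume x₀ x₁ :=
          (continuous_const.mul (vb₄.continuous.mul f.continuous)).intervalIntegrable _ _
        have hsplit : (∫ x in x₀..x₁, R.eval x * f.eval x)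
            = -(∫ x in x₀..x₁, W.eval x * f.eval x)
              - g.eval y₀ * (∫ x in x₀..x₁, vb₃.eval x * f.eval x)
              + g.eval y₁ * (∫ x in x₀..x₁, vb₄.eval x * f.eval x) := by
          calc (∫ x in x₀..x₁, R.eval x * f.eval x)
              = ∫ x in x₀..x₁, ((fun x => -(W.eval x * f.eval x)) x
                  - (fun x => g.eval y₀ * (vb₃.eval x * f.eval x)) x
                  + (fun x => g.eval y₁ * (vb₄.eval x * f.eval x)) x) :=
                intervalIntegral.integral_congr fun x _ => by
                  simp only [hRdef, Polynomial.eval_add, Polynomial.eval_sub,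
                    Polynomial.eval_neg, Polynomial.eval_mul, Polynomial.eval_C]
                  ring
            _ = _ := by
                rw [intervalIntegral.integral_add (c1.sub c2) c3,
                  intervalIntegral.integral_sub c1 c2, intervalIntegral.integral_neg,
                  intervalIntegral.integral_const_mul, intervalIntegral.integral_const_mul]
        rw [hsplit]
        linarith
    intro x
    have := congrArg (Polynomial.eval x) hR0
    simp only [hRdef, Polynomial.eval_add, Polynomial.eval_sub, Polynomial.eval_neg,
      Polynomial.eval_mul, Polynomial.eval_C, Polynomial.eval_zero] at this
    rw [hW, intY_eval (Polynomial.derivative g).continuous] at this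
    linarith
  have master : ∀ x : ℝ,
      Polynomial.derivative (Yp x v₀) = 0 ∧
      (Yp x v₀).eval y₀ = vb₃.eval x ∧ (Yp x v₀).eval y₁ = vb₄.eval x := by
    intro x
    refine key1d hy (le_trans (Yp_natDegree _ _) hv₀.2) ?_
    intro g hg
    have h1 := hR g hg x
    have h2 : (∫ y in y₀..y₁, (Yp x v₀).eval y * (Polynomial.derivative g).eval y)
        = ∫ y in y₀..y₁, evalP v₀ x y * (Polynomial.derivative g).eval y :=
      intervalIntegral.integral_congr fun y _ => by rw [Yp_eval]
    rw [h2, h1]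
    ring
  refine ⟨?_, ?_, ?_⟩
  · intro x y y'
    rw [← Yp_eval x v₀ y, ← Yp_eval x v₀ y',
      Polynomial.eq_C_of_derivative_eq_zero (master x).1]
    simp
  · intro x
    rw [← Yp_eval x v₀ y₀, (master x).2.1]
  · intro x
    rw [← Yp_eval x v₀ y₁, (master x).2.2]

end S0

namespace S0

lemma evalP_mul (p q : Poly2) (x y : ℝ) : evalP (p * q) x y = evalP p x y * evalP q x y := by
  simp [evalP]

lemma evalP_add (p q : Poly2) (x y : ℝ) : evalP (p + q) x y = evalP p x y + evalP q x y := by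
  simp [evalP]

@[simp] lemma evalP_zero (x y : ℝ) : evalP (0 : Poly2) x y = 0 := by simp [evalP]

end S0

open S0 in
theorem statement0' (j : ℕ) (x₀ x₁ y₀ y₁ : ℝ) (hx : x₀ < x₁) (hy : y₀ < y₁)
    (v₀ : Poly2) (hv₀ : memQ' j j v₀)
    (vb₁ vb₂ vb₃ vb₄ : Polynomial ℝ)
    (h₁ : vb₁.natDegree ≤ j) (h₂ : vb₂.natDegree ≤ j)
    (h₃ : vb₃.natDegree ≤ j) (h₄ : vb₄.natDegree ≤ j) :
    (∀ q : Poly2 × Poly2, (q.1.degreeOf 0 ≤ j+1 ∧ q.1.degreeOf 1 ≤ j)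
        ∧ (q.2.degreeOf 0 ≤ j ∧ q.2.degreeOf 1 ≤ j+1) →
      (-(∫ z in Set.Icc x₀ x₁ ×ˢ Set.Icc y₀ y₁, evalP v₀ z.1 z.2 * evalP (pderiv 0 q.1 + pderiv 1 q.2) z.1 z.2)
        + ((∫ y in y₀..y₁, vb₁.eval y * (-(evalP q.1 x₀ y)))
          + (∫ y in y₀..y₁, vb₂.eval y * evalP q.1 x₁ y)
          + (∫ x in x₀..x₁, vb₃.eval x * (-(evalP q.2 x y₀)))
          + (∫ x in x₀..x₁, vb₄.eval x * evalP q.2 x y₁)) = 0))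
    ↔ (∃ c : ℝ, (∀ x y, (x, y) ∈ Set.Icc x₀ x₁ ×ˢ Set.Icc y₀ y₁ → evalP v₀ x y = c)
        ∧ (∀ y ∈ Set.Icc y₀ y₁, vb₁.eval y = c)
        ∧ (∀ y ∈ Set.Icc y₀ y₁, vb₂.eval y = c)
        ∧ (∀ x ∈ Set.Icc x₀ x₁, vb₃.eval x = c)
        ∧ (∀ x ∈ Set.Icc x₀ x₁, vb₄.eval x = c)) := by
  constructor
  · intro H
    have HXhyp : ∀ f g : Polynomial ℝ, f.natDegree ≤ j + 1 → g.natDegree ≤ j →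
      -(∫ z in Set.Icc x₀ x₁ ×ˢ Set.Icc y₀ y₁,
          evalP v₀ z.1 z.2 * ((Polynomial.derivative f).eval z.1 * g.eval z.2))
        + (-(f.eval x₀) * (∫ y in y₀..y₁, vb₁.eval y * g.eval y)
           + f.eval x₁ * (∫ y in y₀..y₁, vb₂.eval y * g.eval y)) = 0 := by
      intro f g hf hg
      have hq : ((emb0 f * emb1 g).degreeOf 0 ≤ j+1 ∧ (emb0 f * emb1 g).degreeOf 1 ≤ j)
          ∧ ((0:Poly2).degreeOf 0 ≤ j ∧ (0:Poly2).degreeOf 1 ≤ j+1) := by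
        refine ⟨⟨?_, ?_⟩, by simp⟩
        · have a1 := MvPolynomial.degreeOf_mul_le 0 (emb0 f) (emb1 g)
          have a2 := degreeOf0_emb0 f
          have a3 := degreeOf0_emb1 g
          omega
        · have a1 := MvPolynomial.degreeOf_mul_le 1 (emb0 f) (emb1 g)
          have a2 := degreeOf1_emb0 f
          have a3 := degreeOf1_emb1 g
          omega
      have hH := H (emb0 f * emb1 g, 0) hq
      have hdiv : pderiv 0 (emb0 f * emb1 g) + pderiv 1 (0:Poly2)
          = emb0 (Polynomial.derivative f) * emb1 g := by
        rw [map_zero, add_zero, pderiv_mul, pderiv0_emb0, pderiv0_emb1, mul_zero, add_zero]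
      simp only at hH
      rw [hdiv] at hH
      simp only [evalP_mul, evalP_emb0, evalP_emb1, evalP_zero, neg_zero, mul_zero,
        intervalIntegral.integral_zero, add_zero] at hH
      have e1 : (∫ y in y₀..y₁, vb₁.eval y * (-(f.eval x₀ * g.eval y)))
          = -(f.eval x₀) * ∫ y in y₀..y₁, vb₁.eval y * g.eval y := by
        rw [← intervalIntegral.integral_const_mul]
        exact intervalIntegral.integral_congr fun y _ => by ring
      have e2 : (∫ y in y₀..y₁, vb₂.eval y * (f.eval x₁ * g.eval y))
          = f.eval x₁ * ∫ y in y₀..y₁, vb₂.eval y * g.eval y := by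
        rw [← intervalIntegral.integral_const_mul]
        exact intervalIntegral.integral_congr fun y _ => by ring
      rw [e1, e2] at hH
      linarith
    have HX := stepX hx hy hv₀ h₁ h₂ HXhyp
    have HYhyp : ∀ f g : Polynomial ℝ, f.natDegree ≤ j → g.natDegree ≤ j + 1 →
      -(∫ z in Set.Icc x₀ x₁ ×ˢ Set.Icc y₀ y₁,
          evalP v₀ z.1 z.2 * (f.eval z.1 * (Polynomial.derivative g).eval z.2))
        + (-(g.eval y₀) * (∫ x in x₀..x₁, vb₃.eval x * f.eval x)
           + g.eval y₁ * (∫ x in x₀..x₁, vb₄.eval x * f.eval x)) = 0 := by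
      intro f g hf hg
      have hq : ((0:Poly2).degreeOf 0 ≤ j+1 ∧ (0:Poly2).degreeOf 1 ≤ j)
          ∧ ((emb0 f * emb1 g).degreeOf 0 ≤ j ∧ (emb0 f * emb1 g).degreeOf 1 ≤ j+1) := by
        refine ⟨by simp, ⟨?_, ?_⟩⟩
        · have a1 := MvPolynomial.degreeOf_mul_le 0 (emb0 f) (emb1 g)
          have a2 := degreeOf0_emb0 f
          have a3 := degreeOf0_emb1 g
          omega
        · have a1 := MvPolynomial.degreeOf_mul_le 1 (emb0 f) (emb1 g)
          have a2 := degreeOf1_emb0 f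
          have a3 := degreeOf1_emb1 g
          omega
      have hH := H (0, emb0 f * emb1 g) hq
      have hdiv : pderiv 0 (0:Poly2) + pderiv 1 (emb0 f * emb1 g)
          = emb0 f * emb1 (Polynomial.derivative g) := by
        rw [map_zero, zero_add, pderiv_mul, pderiv1_emb0, pderiv1_emb1, zero_mul, zero_add]
      simp only at hH
      rw [hdiv] at hH
      simp only [evalP_mul, evalP_emb0, evalP_emb1, evalP_zero, neg_zero, mul_zero,
        intervalIntegral.integral_zero, add_zero, zero_add] at hH
      have e3 : (∫ x in x₀..x₁, vb₃.eval x * (-(f.eval x * g.eval y₀)))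
          = -(g.eval y₀) * ∫ x in x₀..x₁, vb₃.eval x * f.eval x := by
        rw [← intervalIntegral.integral_const_mul]
        exact intervalIntegral.integral_congr fun x _ => by ring
      have e4 : (∫ x in x₀..x₁, vb₄.eval x * (f.eval x * g.eval y₁))
          = g.eval y₁ * ∫ x in x₀..x₁, vb₄.eval x * f.eval x := by
        rw [← intervalIntegral.integral_const_mul]
        exact intervalIntegral.integral_congr fun x _ => by ring
      rw [e3, e4] at hH
      linarith
    have HY := stepY hx hy hv₀ h₃ h₄ HYhyp
    refine ⟨evalP v₀ x₀ y₀, ?_, ?_, ?_, ?_, ?_⟩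
    · intro x y _
      rw [HX.1 x x₀ y, HY.1 x₀ y y₀]
    · intro y _
      rw [HX.2.1 y, HY.1 x₀ y y₀]
    · intro y _
      rw [HX.2.2 y, HY.1 x₁ y y₀, HX.1 x₁ x₀ y₀]
    · intro x _
      rw [HY.2.1 x, HX.1 x x₀ y₀]
    · intro x _
      rw [HY.2.2 x, HX.1 x x₀ y₁, HY.1 x₀ y₁ y₀]
  · rintro ⟨c, hc, hb1, hb2, hb3, hb4⟩ q hq
    clear hq
    set K := Set.Icc x₀ x₁ ×ˢ Set.Icc y₀ y₁ with hK
    have hKmeas : MeasurableSet K := (measurableSet_Icc.prod measurableSet_Icc)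
    have hKcomp : IsCompact K := isCompact_Icc.prod isCompact_Icc
    set A₁ := ∫ y in y₀..y₁, evalP q.1 x₀ y with hA₁
    set B₁ := ∫ y in y₀..y₁, evalP q.1 x₁ y with hB₁
    set A₂ := ∫ x in x₀..x₁, evalP q.2 x y₀ with hA₂
    set B₂ := ∫ x in x₀..x₁, evalP q.2 x y₁ with hB₂
    have I1 : (∫ z in K, evalP (pderiv 0 q.1) z.1 z.2) = B₁ - A₁ := by
      rw [show (∫ z in K, evalP (pderiv 0 q.1) z.1 z.2)
          = ∫ x in x₀..x₁, ∫ y in y₀..y₁, evalP (pderiv 0 q.1) x y from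
        fubini hx.le hy.le (fun x y => evalP (pderiv 0 q.1) x y) (continuous_evalP _)]
      have e : ∀ x : ℝ, (∫ y in y₀..y₁, evalP (pderiv 0 q.1) x y)
          = (Polynomial.derivative (intY y₀ y₁ (fun _ => (1:ℝ)) q.1)).eval x := by
        intro x
        rw [← intY_pderiv, intY_eval continuous_const]
        exact intervalIntegral.integral_congr fun y _ => (mul_one _).symm
      rw [intervalIntegral.integral_congr (fun x _ => e x), integral_derivative,
        intY_eval continuous_const, intY_eval continuous_const, hB₁, hA₁]
      congr 1
      · exact intervalIntegral.integral_congr fun y _ => (mul_one _)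
      · exact intervalIntegral.integral_congr fun y _ => (mul_one _)
    have I2 : (∫ z in K, evalP (pderiv 1 q.2) z.1 z.2) = B₂ - A₂ := by
      rw [show (∫ z in K, evalP (pderiv 1 q.2) z.1 z.2)
          = ∫ x in x₀..x₁, ∫ y in y₀..y₁, evalP (pderiv 1 q.2) x y from
        fubini hx.le hy.le (fun x y => evalP (pderiv 1 q.2) x y) (continuous_evalP _)]
      have e : ∀ x : ℝ, (∫ y in y₀..y₁, evalP (pderiv 1 q.2) x y)
          = evalP q.2 x y₁ - evalP q.2 x y₀ := by
        intro x
        have h5 : (∫ y in y₀..y₁, evalP (pderiv 1 q.2) x y)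
            = ∫ y in y₀..y₁, (Polynomial.derivative (Yp x q.2)).eval y := by
          refine intervalIntegral.integral_congr fun y _ => ?_
          rw [← Yp_pderiv, Yp_eval]
        rw [h5, integral_derivative, Yp_eval, Yp_eval]
      rw [intervalIntegral.integral_congr (fun x _ => e x),
        intervalIntegral.integral_sub ((continuous_evalP_x q.2 y₁).intervalIntegrable _ _)
          ((continuous_evalP_x q.2 y₀).intervalIntegrable _ _), hB₂, hA₂]
    have Irect : (∫ z in K, evalP v₀ z.1 z.2 * evalP (pderiv 0 q.1 + pderiv 1 q.2) z.1 z.2)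
        = c * ((B₁ - A₁) + (B₂ - A₂)) := by
      have s1 : (∫ z in K, evalP v₀ z.1 z.2 * evalP (pderiv 0 q.1 + pderiv 1 q.2) z.1 z.2)
          = ∫ z in K, c * evalP (pderiv 0 q.1 + pderiv 1 q.2) z.1 z.2 := by
        refine setIntegral_congr_fun hKmeas fun z hz => ?_
        rw [hc z.1 z.2 (by simpa using hz)]
      rw [s1, MeasureTheory.integral_const_mul]
      congr 1
      have s2 : (∫ z in K, evalP (pderiv 0 q.1 + pderiv 1 q.2) z.1 z.2)
          = ∫ z in K, (evalP (pderiv 0 q.1) z.1 z.2 + evalP (pderiv 1 q.2) z.1 z.2) := by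
        refine setIntegral_congr_fun hKmeas fun z _ => evalP_add _ _ _ _
      rw [s2, MeasureTheory.integral_add
        (((continuous_evalP _).continuousOn).integrableOn_compact hKcomp)
        (((continuous_evalP _).continuousOn).integrableOn_compact hKcomp), I1, I2]
    have E1 : (∫ y in y₀..y₁, vb₁.eval y * (-(evalP q.1 x₀ y))) = c * (-A₁) := by
      rw [hA₁, ← intervalIntegral.integral_neg, ← intervalIntegral.integral_const_mul]
      refine intervalIntegral.integral_congr fun y hy' => ?_
      rw [Set.uIcc_of_le hy.le] at hy'
      rw [hb1 y hy']
    have E2 : (∫ y in y₀..y₁, vb₂.eval y * evalP q.1 x₁ y) = c * B₁ := by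
      rw [hB₁, ← intervalIntegral.integral_const_mul]
      refine intervalIntegral.integral_congr fun y hy' => ?_
      rw [Set.uIcc_of_le hy.le] at hy'
      rw [hb2 y hy']
    have E3 : (∫ x in x₀..x₁, vb₃.eval x * (-(evalP q.2 x y₀))) = c * (-A₂) := by
      rw [hA₂, ← intervalIntegral.integral_neg, ← intervalIntegral.integral_const_mul]
      refine intervalIntegral.integral_congr fun x hx' => ?_
      rw [Set.uIcc_of_le hx.le] at hx'
      rw [hb3 x hx']
    have E4 : (∫ x in x₀..x₁, vb₄.eval x * evalP q.2 x y₁) = c * B₂ := by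
      rw [hB₂, ← intervalIntegral.integral_const_mul]
      refine intervalIntegral.integral_congr fun x hx' => ?_
      rw [Set.uIcc_of_le hx.le] at hx'
      rw [hb4 x hx']
    rw [Irect, E1, E2, E3, E4]
    ring


/-- On the rectangle `K = [x₀,x₁] × [y₀,y₁]`, for `v₀ ∈ Q_j` and edge
polynomials `v_{b,m}` of degree `≤ j`, the weak gradient functional
`q ↦ -∫_K v₀ div q + ∑_m ∫_{F_m} v_{b,m} (q·n_m)` vanishes on all of `RT_j(K)` iff
`v₀` and all the `v_{b,m}` are the same constant on `K` and its edges. -/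
theorem statement0 (j : ℕ) (x₀ x₁ y₀ y₁ : ℝ) (hx : x₀ < x₁) (hy : y₀ < y₁)
    (v₀ : Poly2) (hv₀ : memQ j j v₀)
    (vb₁ vb₂ vb₃ vb₄ : Polynomial ℝ)
    (h₁ : vb₁.natDegree ≤ j) (h₂ : vb₂.natDegree ≤ j)
    (h₃ : vb₃.natDegree ≤ j) (h₄ : vb₄.natDegree ≤ j) :
    (∀ q : Poly2 × Poly2, memRT j q →
      (-(∫ z in Set.Icc x₀ x₁ ×ˢ Set.Icc y₀ y₁, evalP v₀ z.1 z.2 * evalP (divP q) z.1 z.2)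
        + ((∫ y in y₀..y₁, vb₁.eval y * (-(evalP q.1 x₀ y)))
          + (∫ y in y₀..y₁, vb₂.eval y * evalP q.1 x₁ y)
          + (∫ x in x₀..x₁, vb₃.eval x * (-(evalP q.2 x y₀)))
          + (∫ x in x₀..x₁, vb₄.eval x * evalP q.2 x y₁)) = 0))
    ↔ (∃ c : ℝ, (∀ x y, (x, y) ∈ Set.Icc x₀ x₁ ×ˢ Set.Icc y₀ y₁ → evalP v₀ x y = c)
        ∧ (∀ y ∈ Set.Icc y₀ y₁, vb₁.eval y = c)
        ∧ (∀ y ∈ Set.Icc y₀ y₁, vb₂.eval y = c)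
        ∧ (∀ x ∈ Set.Icc x₀ x₁, vb₃.eval x = c)
        ∧ (∀ x ∈ Set.Icc x₀ x₁, vb₄.eval x = c)) := by
  have h := statement0' j x₀ x₁ y₀ y₁ hx hy v₀ ⟨hv₀.1, hv₀.2⟩ vb₁ vb₂ vb₃ vb₄ h₁ h₂ h₃ h₄
  exact h
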